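/- Saks–Henstock Lemma: Let f be HK integrable on [a,b] and let ε > 0 with δ a positive gauge such that |σ(f,P) - ∫_a^b f| < ε for every δ-fine tagged partition P of [a,b]. Then for every δ-fine tagged family (([aⱼ,bⱼ],xⱼ))_{j=1}^p in [a,b] (finitely many nonoverlapping tagged subintervals, not necessarily covering [a,b]), one has Σⱼ |f(xⱼ)(bⱼ - aⱼ) - ∫_{aⱼ}^{bⱼ} f| ≤ 2ε. -/

import Mathlib

def IsTaggedPartition (a b : ℝ) (n : ℕ) (t x : ℕ → ℝ) : Prop :=
  t 0 = a ∧ t n = b ∧ (∀ j < n, t j < t (j + 1)) ∧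
    ∀ j < n, x j ∈ Set.Icc (t j) (t (j + 1))

def IsFine (δ : ℝ → ℝ) (n : ℕ) (t x : ℕ → ℝ) : Prop :=
  ∀ j < n, t (j + 1) - t j < δ (x j)

def RiemannSum (g : ℝ → ℝ) (n : ℕ) (t x : ℕ → ℝ) : ℝ :=
  ∑ j ∈ Finset.range n, g (x j) * (t (j + 1) - t j)

/-- `f` is Henstock–Kurzweil integrable on `[a,b]` with integral `α`. -/
def HKIntegral (a b : ℝ) (f : ℝ → ℝ) (α : ℝ) : Prop :=
  ∀ ε > 0, ∃ δ : ℝ → ℝ, (∀ y ∈ Set.Icc a b, 0 < δ y) ∧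
    ∀ (n : ℕ) (t x : ℕ → ℝ), IsTaggedPartition a b n t x → IsFine δ n t x →
      |RiemannSum f n t x - α| < ε

/-- `(p, c, d, x)` is a tagged family in `[a,b]`: finitely many nonoverlapping
(ordered) nondegenerate closed subintervals `[c j, d j]` of `[a,b]` with tags
`x j ∈ [c j, d j]`. -/
def IsTaggedFamily (a b : ℝ) (p : ℕ) (c d x : ℕ → ℝ) : Prop :=
  (∀ j < p, a ≤ c j ∧ c j < d j ∧ d j ≤ b) ∧
    (∀ j, j + 1 < p → d j ≤ c (j + 1)) ∧
    ∀ j < p, x j ∈ Set.Icc (c j) (d j)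

def IsFamilyFine (δ : ℝ → ℝ) (p : ℕ) (c d x : ℕ → ℝ) : Prop :=
  ∀ j < p, d j - c j < δ (x j)

/-- Saks–Henstock lemma: if `δ` is a gauge witnessing `ε`-approximation of the HK
integral of `f` on `[a,b]`, then for every `δ`-fine tagged family the total deviation
of the Riemann terms from the corresponding partial integrals is at most `2ε`. -/
lemma tp_trivial (u : ℝ) : IsTaggedPartition u u 0 (fun _ => u) (fun _ => u) :=
  ⟨rfl, rfl, fun j hj => (Nat.not_lt_zero j hj).elim, fun j hj => (Nat.not_lt_zero j hj).elim⟩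

lemma fine_trivial (Γ : ℝ → ℝ) (t x : ℕ → ℝ) : IsFine Γ 0 t x :=
  fun j hj => (Nat.not_lt_zero j hj).elim

lemma rs_zero (f : ℝ → ℝ) (t x : ℕ → ℝ) : RiemannSum f 0 t x = 0 := by
  simp [RiemannSum]

lemma tp_single {y z τ : ℝ} (hyz : y < z) (hτ : τ ∈ Set.Icc y z) :
    IsTaggedPartition y z 1 (fun k => if k = 0 then y else z) (fun _ => τ) := by
  refine ⟨by simp, by simp, ?_, ?_⟩
  · intro j hj
    interval_cases j
    simpa using hyz
  · intro j hj
    interval_cases j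
    simpa using hτ

lemma fine_single {y z τ : ℝ} (Γ : ℝ → ℝ) (h : z - y < Γ τ) :
    IsFine Γ 1 (fun k => if k = 0 then y else z) (fun _ => τ) := by
  intro j hj
  interval_cases j
  simpa using h

lemma rs_single (f : ℝ → ℝ) (y z τ : ℝ) :
    RiemannSum f 1 (fun k => if k = 0 then y else z) (fun _ => τ) = f τ * (z - y) := by
  simp [RiemannSum]

lemma tp_mono {u v : ℝ} {n : ℕ} {t x : ℕ → ℝ} (h : IsTaggedPartition u v n t x) :
    ∀ i j, i ≤ j → j ≤ n → t i ≤ t j := by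
  obtain ⟨h0, hn, hinc, htag⟩ := h
  intro i j hij hjn
  induction j with
  | zero => simp_all
  | succ m ih =>
    rcases Nat.lt_or_ge i (m+1) with h | h
    · exact (ih (by omega) (by omega)).trans (hinc m (by omega)).le
    · have : i = m + 1 := by omega
      subst this; rfl

lemma tag_mem {u v : ℝ} {n : ℕ} {t x : ℕ → ℝ} (h : IsTaggedPartition u v n t x) :
    ∀ j < n, x j ∈ Set.Icc u v := by
  intro j hj
  obtain ⟨hx1, hx2⟩ := h.2.2.2 j hj
  refine ⟨?_, ?_⟩
  · calc u = t 0 := h.1.symm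
      _ ≤ t j := tp_mono h 0 j (by omega) (by omega)
      _ ≤ x j := hx1
  · calc x j ≤ t (j+1) := hx2
      _ ≤ t n := tp_mono h (j+1) n (by omega) le_rfl
      _ = v := h.2.1

lemma tp_append {u v w : ℝ} {Γ f : ℝ → ℝ} {n m : ℕ} {t x t' x' : ℕ → ℝ}
    (hP : IsTaggedPartition u v n t x) (hQ : IsTaggedPartition v w m t' x')
    (hPf : IsFine Γ n t x) (hQf : IsFine Γ m t' x') :
    ∃ T X, IsTaggedPartition u w (n + m) T X ∧ IsFine Γ (n + m) T X ∧
      RiemannSum f (n + m) T X = RiemannSum f n t x + RiemannSum f m t' x' := by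
  obtain ⟨ht0, htn, hinc, htag⟩ := hP
  obtain ⟨ht0', htn', hinc', htag'⟩ := hQ
  set T : ℕ → ℝ := fun k => if k ≤ n then t k else t' (k - n) with hT
  set X : ℕ → ℝ := fun k => if k < n then x k else x' (k - n) with hX
  have hTh : ∀ k, n ≤ k → T k = t' (k - n) := by
    intro k hk
    rcases eq_or_lt_of_le hk with h | h
    · simp only [hT, ← h, le_refl, if_pos, Nat.sub_self]
      rw [htn, ht0']
    · simp only [hT, if_neg (by omega : ¬ k ≤ n)]
  have hTl : ∀ k, k ≤ n → T k = t k := by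
    intro k hk; simp only [hT, if_pos hk]
  have hXl : ∀ k, k < n → X k = x k := fun k hk => by simp only [hX, if_pos hk]
  have hXh : ∀ k, n ≤ k → X k = x' (k - n) := by
    intro k hk; simp only [hX, if_neg (by omega : ¬ k < n)]
  refine ⟨T, X, ⟨?_, ?_, ?_, ?_⟩, ?_, ?_⟩
  · rw [hTl 0 (by omega)]; exact ht0
  · rw [hTh (n+m) (by omega)]; rw [Nat.add_sub_cancel_left]; exact htn'
  · intro j hj
    rcases Nat.lt_or_ge j n with h | h
    · rw [hTl j (by omega), hTl (j+1) (by omega)]; exact hinc j h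
    · rw [hTh j h, hTh (j+1) (by omega), show j + 1 - n = (j - n) + 1 by omega]
      exact hinc' (j - n) (by omega)
  · intro j hj
    rcases Nat.lt_or_ge j n with h | h
    · rw [hTl j (by omega), hTl (j+1) (by omega), hXl j h]; exact htag j h
    · rw [hTh j h, hTh (j+1) (by omega), hXh j h, show j + 1 - n = (j - n) + 1 by omega]
      exact htag' (j - n) (by omega)
  · intro j hj
    rcases Nat.lt_or_ge j n with h | h
    · rw [hTl j (by omega), hTl (j+1) (by omega), hXl j h]; exact hPf j h
    · rw [hTh j h, hTh (j+1) (by omega), hXh j h, show j + 1 - n = (j - n) + 1 by omega]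
      exact hQf (j - n) (by omega)
  · unfold RiemannSum
    rw [Finset.sum_range_add]
    congr 1
    · apply Finset.sum_congr rfl
      intro k hk
      have hk' : k < n := Finset.mem_range.mp hk
      rw [hXl k hk', hTl k (by omega), hTl (k+1) (by omega)]
    · apply Finset.sum_congr rfl
      intro k hk
      have hk' : k < m := Finset.mem_range.mp hk
      rw [hXh (n+k) (by omega), hTh (n+k) (by omega), hTh (n+k+1) (by omega),
        show n + k - n = k by omega, show n + k + 1 - n = k + 1 by omega]

lemma concat_chain (f Γ : ℝ → ℝ) (w s : ℕ → ℝ) (m : ℕ)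
    (h : ∀ i < m, ∃ n t x, IsTaggedPartition (w i) (w (i+1)) n t x ∧ IsFine Γ n t x ∧
      RiemannSum f n t x = s i) :
    ∃ n t x, IsTaggedPartition (w 0) (w m) n t x ∧ IsFine Γ n t x ∧
      RiemannSum f n t x = ∑ i ∈ Finset.range m, s i := by
  induction m with
  | zero =>
    exact ⟨0, fun _ => w 0, fun _ => w 0, tp_trivial _, fine_trivial _ _ _, by
      simp [rs_zero]⟩
  | succ m ih =>
    obtain ⟨n, t, x, hP, hPf, hs⟩ := ih (fun i hi => h i (by omega))
    obtain ⟨n', t', x', hQ, hQf, hs'⟩ := h m (by omega)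
    obtain ⟨T, X, h1, h2, h3⟩ := tp_append hP hQ hPf hQf
    exact ⟨n + n', T, X, h1, h2, by rw [h3, hs, hs', Finset.sum_range_succ]⟩

lemma cousin {u v : ℝ} (huv : u ≤ v) (Γ : ℝ → ℝ) (hΓ : ∀ y ∈ Set.Icc u v, 0 < Γ y) :
    ∃ n t x, IsTaggedPartition u v n t x ∧ IsFine Γ n t x := by
  set S : Set ℝ := {y | y ∈ Set.Icc u v ∧
    ∃ n t x, IsTaggedPartition u y n t x ∧ IsFine Γ n t x} with hSdef
  have huS : u ∈ S := ⟨⟨le_refl u, huv⟩, 0, fun _ => u, fun _ => u, tp_trivial u,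
    fine_trivial _ _ _⟩
  have hne : S.Nonempty := ⟨u, huS⟩
  have hbdd : BddAbove S := ⟨v, fun y hy => hy.1.2⟩
  set σ := sSup S with hσ
  have hσmem : σ ∈ Set.Icc u v := ⟨le_csSup hbdd huS, csSup_le hne (fun y hy => hy.1.2)⟩
  have hΓσ : 0 < Γ σ := hΓ σ hσmem
  have hσS : σ ∈ S := by
    obtain ⟨y, hyS, hy⟩ := exists_lt_of_lt_csSup hne (show σ - Γ σ < σ by linarith)
    have hyσ : y ≤ σ := le_csSup hbdd hyS
    rcases eq_or_lt_of_le hyσ with h | h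
    · rwa [← h]
    · obtain ⟨n, t, x, hP, hPf⟩ := hyS.2
      obtain ⟨T, X, h1, h2, _⟩ := tp_append (f := fun _ => 0) hP
        (tp_single h ⟨hyσ, le_refl σ⟩) hPf (fine_single Γ (by linarith))
      exact ⟨hσmem, n + 1, T, X, h1, h2⟩
  rcases eq_or_lt_of_le hσmem.2 with h | h
  · obtain ⟨_, n, t, x, hP, hPf⟩ := hσS
    exact ⟨n, t, x, h ▸ hP, hPf⟩
  · exfalso
    set z := min v (σ + Γ σ / 2) with hz
    have hσz : σ < z := by
      apply lt_min h; linarith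
    have hzv : z ≤ v := min_le_left _ _
    have hzS : z ∈ S := by
      obtain ⟨_, n, t, x, hP, hPf⟩ := hσS
      obtain ⟨T, X, h1, h2, _⟩ := tp_append (f := fun _ => 0) hP
        (tp_single hσz ⟨le_refl σ, hσz.le⟩) hPf
        (fine_single Γ (by
          have : z ≤ σ + Γ σ / 2 := min_le_right _ _
          linarith))
      exact ⟨⟨hσmem.1.trans hσz.le, hzv⟩, n + 1, T, X, h1, h2⟩
    have : z ≤ σ := le_csSup hbdd hzS
    linarith

lemma fine_of_le {Γ1 Γ2 : ℝ → ℝ} {n : ℕ} {t x : ℕ → ℝ} (h : IsFine Γ1 n t x)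
    (hle : ∀ z, Γ1 z ≤ Γ2 z) : IsFine Γ2 n t x :=
  fun j hj => lt_of_lt_of_le (h j hj) (hle (x j))

lemma hk_unique {u v : ℝ} (huv : u ≤ v) {f : ℝ → ℝ} {α β : ℝ}
    (hα : HKIntegral u v f α) (hβ : HKIntegral u v f β) : α = β := by
  by_contra hne
  have habs : 0 < |α - β| / 2 := by
    have : α - β ≠ 0 := sub_ne_zero.mpr hne
    have := abs_pos.mpr this
    linarith
  obtain ⟨γ1, hγ1pos, hγ1⟩ := hα _ habs
  obtain ⟨γ2, hγ2pos, hγ2⟩ := hβ _ habs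
  obtain ⟨n, t, x, hP, hPf⟩ := cousin huv (fun z => min (γ1 z) (γ2 z))
    (fun z hz => lt_min (hγ1pos z hz) (hγ2pos z hz))
  have h1 := hγ1 n t x hP (fine_of_le hPf (fun z => min_le_left _ _))
  have h2 := hγ2 n t x hP (fine_of_le hPf (fun z => min_le_right _ _))
  have key : |α - β| ≤ |RiemannSum f n t x - α| + |RiemannSum f n t x - β| := by
    have := abs_sub_le α (RiemannSum f n t x) β
    rwa [abs_sub_comm α (RiemannSum f n t x)] at this
  linarith

lemma sub_integrable {a b u v : ℝ} {f : ℝ → ℝ} {I : ℝ} (hf : HKIntegral a b f I)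
    (hau : a ≤ u) (huv : u ≤ v) (hvb : v ≤ b) :
    ∃ G : ℝ, HKIntegral u v f G := by
  have hsub : Set.Icc u v ⊆ Set.Icc a b := fun z hz => ⟨hau.trans hz.1, hz.2.trans hvb⟩
  have hsub1 : Set.Icc a u ⊆ Set.Icc a b := fun z hz => ⟨hz.1, hz.2.trans (huv.trans hvb)⟩
  have hsub2 : Set.Icc v b ⊆ Set.Icc a b := fun z hz => ⟨(hau.trans huv).trans hz.1, hz.2⟩
  have hpos : ∀ k : ℕ, (0:ℝ) < 1 / (k + 1) := fun k => by positivity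
  choose δs hδspos hδs using fun k : ℕ => hf (1/(k+1)) (hpos k)
  set Δ : ℕ → ℝ → ℝ := fun k => Nat.rec (motive := fun _ => ℝ → ℝ) (δs 0)
    (fun i r z => min (r z) (δs (i+1) z)) k with hΔdef
  have hΔpos : ∀ k, ∀ z ∈ Set.Icc a b, 0 < Δ k z := by
    intro k
    induction k with
    | zero => exact hδspos 0
    | succ i ih => exact fun z hz => lt_min (ih z hz) (hδspos (i+1) z hz)
  have hΔle : ∀ k i, i ≤ k → ∀ z, Δ k z ≤ δs i z := by
    intro k
    induction k with
    | zero => intro i hi z; interval_cases i; exact le_refl _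
    | succ m ih =>
      intro i hi z
      rcases Nat.lt_or_ge i (m+1) with h | h
      · exact (min_le_left _ _).trans (ih i (by omega) z)
      · have : i = m + 1 := by omega
        subst this; exact min_le_right _ _
  -- key Cauchy estimate
  have key : ∀ k : ℕ, ∀ n1 t1 x1 n2 t2 x2, IsTaggedPartition u v n1 t1 x1 →
      IsFine (δs k) n1 t1 x1 → IsTaggedPartition u v n2 t2 x2 → IsFine (δs k) n2 t2 x2 →
      |RiemannSum f n1 t1 x1 - RiemannSum f n2 t2 x2| ≤ 2 / (k + 1) := by
    intro k n1 t1 x1 n2 t2 x2 hP1 hPf1 hP2 hPf2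
    obtain ⟨nl, tl, xl, hPl, hPlf⟩ := cousin hau (δs k) (fun z hz => hδspos k z (hsub1 hz))
    obtain ⟨nr, tr, xr, hPr, hPrf⟩ := cousin hvb (δs k) (fun z hz => hδspos k z (hsub2 hz))
    obtain ⟨T1, X1, hA1, hA1f, hA1s⟩ := tp_append (f := f) hPl hP1 hPlf hPf1
    obtain ⟨T1', X1', hB1, hB1f, hB1s⟩ := tp_append (f := f) hA1 hPr hA1f hPrf
    obtain ⟨T2, X2, hA2, hA2f, hA2s⟩ := tp_append (f := f) hPl hP2 hPlf hPf2
    obtain ⟨T2', X2', hB2, hB2f, hB2s⟩ := tp_append (f := f) hA2 hPr hA2f hPrf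
    have e1 := hδs k _ _ _ hB1 hB1f
    have e2 := hδs k _ _ _ hB2 hB2f
    rw [hB1s, hA1s] at e1
    rw [hB2s, hA2s] at e2
    have habs : |RiemannSum f n1 t1 x1 - RiemannSum f n2 t2 x2| =
        |(RiemannSum f nl tl xl + RiemannSum f n1 t1 x1 + RiemannSum f nr tr xr - I) -
         (RiemannSum f nl tl xl + RiemannSum f n2 t2 x2 + RiemannSum f nr tr xr - I)| := by
      congr 1; ring
    rw [habs]
    have := abs_sub _ _ |>.trans (add_le_add e1.le e2.le)
    calc |(RiemannSum f nl tl xl + RiemannSum f n1 t1 x1 + RiemannSum f nr tr xr - I) -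
         (RiemannSum f nl tl xl + RiemannSum f n2 t2 x2 + RiemannSum f nr tr xr - I)|
        ≤ |RiemannSum f nl tl xl + RiemannSum f n1 t1 x1 + RiemannSum f nr tr xr - I| +
          |RiemannSum f nl tl xl + RiemannSum f n2 t2 x2 + RiemannSum f nr tr xr - I| :=
          abs_sub _ _
      _ ≤ 2 / (k + 1) := by
          rw [show (2:ℝ)/(k+1) = 1/(k+1) + 1/(k+1) by ring]
          exact add_le_add e1.le e2.le
  choose pn pt px hPk hPkf using fun k : ℕ =>
    cousin huv (Δ k) (fun z hz => hΔpos k z (hsub hz))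
  set s : ℕ → ℝ := fun k => RiemannSum f (pn k) (pt k) (px k) with hs
  have hcau : ∀ (k l N : ℕ), N ≤ k → N ≤ l → |s k - s l| ≤ 2 / (N + 1) := by
    intro k l N hk hl
    exact key N _ _ _ _ _ _ (hPk k) (fine_of_le (hPkf k) (hΔle k N hk))
      (hPk l) (fine_of_le (hPkf l) (hΔle l N hl))
  have htend0 : Filter.Tendsto (fun N : ℕ => 2 / ((N:ℝ) + 1)) Filter.atTop (nhds 0) := by
    have h : Filter.Tendsto (fun n : ℕ => 1 / ((n : ℝ) + 1)) Filter.atTop (nhds 0) :=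
      tendsto_one_div_add_atTop_nhds_zero_nat
    have := h.const_mul (2:ℝ)
    simpa [div_eq_mul_inv, mul_comm] using this
  have hcs : CauchySeq s :=
    cauchySeq_of_le_tendsto_0 (fun N => 2 / ((N:ℝ) + 1))
      (fun n m N hn hm => by rw [Real.dist_eq]; exact hcau n m N hn hm) htend0
  obtain ⟨G, hG⟩ := cauchySeq_tendsto_of_complete hcs
  refine ⟨G, ?_⟩
  intro ε hε
  obtain ⟨k, hk⟩ := exists_nat_gt (2 / ε)
  have hkε : 2 / ((k:ℝ) + 1) < ε := by
    rw [div_lt_iff₀ (by positivity)]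
    rw [div_lt_iff₀ hε] at hk
    nlinarith
  refine ⟨Δ k, fun z hz => hΔpos k z (hsub hz), ?_⟩
  intro n1 t1 x1 hP1 hPf1
  have hbound : ∀ l, k ≤ l → |RiemannSum f n1 t1 x1 - s l| ≤ 2 / (k + 1) := by
    intro l hl
    exact key k _ _ _ _ _ _ hP1 (fine_of_le hPf1 (hΔle k k le_rfl))
      (hPk l) (fine_of_le (hPkf l) (hΔle l k hl))
  have htend : Filter.Tendsto (fun l => |RiemannSum f n1 t1 x1 - s l|) Filter.atTop
      (nhds |RiemannSum f n1 t1 x1 - G|) := ((tendsto_const_nhds.sub hG).abs)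
  have : |RiemannSum f n1 t1 x1 - G| ≤ 2 / (k + 1) :=
    le_of_tendsto htend (Filter.eventually_atTop.mpr ⟨k, hbound⟩)
  linarith

lemma additivity {a b : ℝ} {f : ℝ → ℝ} {I : ℝ} (hf : HKIntegral a b f I)
    (m : ℕ) (w : ℕ → ℝ) (hw0 : w 0 = a) (hwm : w m = b)
    (hmono : ∀ i < m, w i ≤ w (i+1))
    (hmem : ∀ i ≤ m, a ≤ w i ∧ w i ≤ b)
    (H : ℕ → ℝ) (hH : ∀ i < m, HKIntegral (w i) (w (i+1)) f (H i)) :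
    I = ∑ i ∈ Finset.range m, H i := by
  have key : ∀ η > 0, |I - ∑ i ∈ Finset.range m, H i| ≤ (m + 1) * η := by
    intro η hη
    obtain ⟨γ, hγpos, hγ⟩ := hf η hη
    have pieces : ∀ i, ∃ si, i < m →
        (∃ n t x, IsTaggedPartition (w i) (w (i+1)) n t x ∧ IsFine γ n t x ∧
          RiemannSum f n t x = si) ∧ |si - H i| < η := by
      intro i
      by_cases hi : i < m
      · obtain ⟨g, hgpos, hge⟩ := hH i hi η hη
        have hsubi : Set.Icc (w i) (w (i+1)) ⊆ Set.Icc a b := fun z hz =>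
          ⟨(hmem i (by omega)).1.trans hz.1, hz.2.trans (hmem (i+1) (by omega)).2⟩
        obtain ⟨n, t, x, hP, hPf⟩ := cousin (hmono i hi) (fun z => min (γ z) (g z))
          (fun z hz => lt_min (hγpos z (hsubi hz)) (hgpos z hz))
        refine ⟨RiemannSum f n t x, fun _ => ⟨⟨n, t, x, hP,
          fine_of_le hPf (fun z => min_le_left _ _), rfl⟩, ?_⟩⟩
        exact hge n t x hP (fine_of_le hPf (fun z => min_le_right _ _))
      · exact ⟨0, fun h => absurd h hi⟩
    choose s hs using pieces
    obtain ⟨n, t, x, hP, hPf, hsum⟩ := concat_chain f γ w s m (fun i hi => (hs i hi).1)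
    rw [hw0, hwm] at hP
    have herr := hγ n t x hP hPf
    rw [hsum] at herr
    have hdiff : |∑ i ∈ Finset.range m, s i - ∑ i ∈ Finset.range m, H i| ≤ m * η := by
      rw [← Finset.sum_sub_distrib]
      calc |∑ i ∈ Finset.range m, (s i - H i)| ≤ ∑ i ∈ Finset.range m, |s i - H i| :=
            Finset.abs_sum_le_sum_abs _ _
        _ ≤ ∑ i ∈ Finset.range m, η := Finset.sum_le_sum (fun i hi =>
            (hs i (Finset.mem_range.mp hi)).2.le)
        _ = m * η := by rw [Finset.sum_const, Finset.card_range, nsmul_eq_mul]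
    calc |I - ∑ i ∈ Finset.range m, H i| ≤
        |∑ i ∈ Finset.range m, s i - I| + |∑ i ∈ Finset.range m, s i -
          ∑ i ∈ Finset.range m, H i| := by
          rw [abs_sub_comm (∑ i ∈ Finset.range m, s i) I]
          exact abs_sub_le _ _ _
      _ ≤ η + m * η := add_le_add herr.le hdiff
      _ = (m + 1) * η := by ring
  by_contra hne
  have habs : 0 < |I - ∑ i ∈ Finset.range m, H i| := by
    have : I - ∑ i ∈ Finset.range m, H i ≠ 0 := sub_ne_zero.mpr hne
    exact abs_pos.mpr this
  have hkey := key (|I - ∑ i ∈ Finset.range m, H i| / (2 * (m + 1)))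
    (by positivity)
  have hm1 : (0:ℝ) < m + 1 := by positivity
  have heq : ((m:ℝ) + 1) * (|I - ∑ i ∈ Finset.range m, H i| / (2 * (m + 1))) =
      |I - ∑ i ∈ Finset.range m, H i| / 2 := by
    field_simp
  rw [heq] at hkey
  linarith

theorem saks_henstock (a b : ℝ) (hab : a ≤ b) (f : ℝ → ℝ) (I : ℝ)
    (hf : HKIntegral a b f I) (ε : ℝ) (hε : 0 < ε) (δ : ℝ → ℝ)
    (hδpos : ∀ y ∈ Set.Icc a b, 0 < δ y)
    (hδ : ∀ (n : ℕ) (t x : ℕ → ℝ), IsTaggedPartition a b n t x → IsFine δ n t x →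
      |RiemannSum f n t x - I| < ε)
    (p : ℕ) (c d x : ℕ → ℝ) (hfam : IsTaggedFamily a b p c d x)
    (hfine : IsFamilyFine δ p c d x)
    (F : ℕ → ℝ) (hF : ∀ j < p, HKIntegral (c j) (d j) f (F j)) :
    ∑ j ∈ Finset.range p, |f (x j) * (d j - c j) - F j| ≤ 2 * ε := by
  rcases Nat.eq_zero_or_pos p with rfl | hp
  · simp; positivity
  set w : ℕ → ℝ := fun i => if i = 0 then a else if 2*p+1 ≤ i then b
    else if i % 2 = 1 then c (i/2) else d (i/2 - 1) with hwdef
  have hw0 : w 0 = a := by simp [hwdef]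
  have hwm : w (2*p+1) = b := by
    simp only [hwdef]
    rw [if_neg (by omega), if_pos (by omega)]
  have hwodd : ∀ j < p, w (2*j+1) = c j := by
    intro j hj
    simp only [hwdef]
    rw [if_neg (by omega), if_neg (by omega), if_pos (by omega)]
    congr 1; omega
  have hweven : ∀ j < p, w (2*j+2) = d j := by
    intro j hj
    simp only [hwdef]
    rw [if_neg (by omega), if_neg (by omega), if_neg (by omega)]
    congr 1; omega
  have hwmem : ∀ i, a ≤ w i ∧ w i ≤ b := by
    intro i
    simp only [hwdef]
    split_ifs with h1 h2 h3
    · exact ⟨le_rfl, hab⟩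
    · exact ⟨hab, le_rfl⟩
    · have hip : i/2 < p := by omega
      obtain ⟨ha1, ha2, ha3⟩ := hfam.1 (i/2) hip
      exact ⟨ha1, ha2.le.trans ha3⟩
    · have hip : i/2 - 1 < p := by omega
      obtain ⟨ha1, ha2, ha3⟩ := hfam.1 _ hip
      exact ⟨ha1.trans ha2.le, ha3⟩
  have hmono : ∀ i < 2*p+1, w i ≤ w (i+1) := by
    intro i hi
    rcases Nat.eq_zero_or_pos i with rfl | hipos
    · rw [hw0, show 0+1 = 2*0+1 from rfl, hwodd 0 hp]
      exact (hfam.1 0 hp).1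
    · rcases Nat.mod_two_eq_zero_or_one i with h2 | h2
      · obtain ⟨k, rfl⟩ : ∃ k, i = 2*k+2 := ⟨i/2-1, by omega⟩
        have hk : k < p := by omega
        rw [hweven k hk]
        rcases Nat.lt_or_ge (k+1) p with hk1 | hk1
        · rw [show 2*k+2+1 = 2*(k+1)+1 by ring, hwodd (k+1) hk1]
          exact hfam.2.1 k hk1
        · rw [show 2*k+2+1 = 2*p+1 by omega, hwm]
          exact (hfam.1 k hk).2.2
      · obtain ⟨k, rfl⟩ : ∃ k, i = 2*k+1 := ⟨i/2, by omega⟩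
        have hk : k < p := by omega
        rw [hwodd k hk, show 2*k+1+1 = 2*k+2 by ring, hweven k hk]
        exact (hfam.1 k hk).2.1.le
  have hpieceInt : ∀ i, ∃ G, i < 2*p+1 → HKIntegral (w i) (w (i+1)) f G := by
    intro i
    by_cases hi : i < 2*p+1
    · obtain ⟨G, hG⟩ := sub_integrable hf (hwmem i).1 (hmono i hi) (hwmem (i+1)).2
      exact ⟨G, fun _ => hG⟩
    · exact ⟨0, fun h => absurd h hi⟩
  choose H hH using hpieceInt
  have hHF : ∀ j < p, H (2*j+1) = F j := by
    intro j hj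
    have h1 := hH (2*j+1) (by omega)
    rw [hwodd j hj, show 2*j+1+1 = 2*j+2 by ring, hweven j hj] at h1
    exact hk_unique (hfam.1 j hj).2.1.le h1 (hF j hj)
  have hIsum : I = ∑ i ∈ Finset.range (2*p+1), H i :=
    additivity hf (2*p+1) w hw0 hwm hmono (fun i _ => hwmem i) H hH
  have main : ∀ S : Finset ℕ, S ⊆ Finset.range p →
      |∑ j ∈ S, (f (x j) * (d j - c j) - F j)| ≤ ε := by
    intro S hS
    have key : ∀ η > 0, |∑ j ∈ S, (f (x j) * (d j - c j) - F j)| ≤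
        ε + (2*(p:ℝ)+1) * η := by
      intro η hη
      have pieces : ∀ i, ∃ si, i < 2*p+1 →
          (∃ n' t' x', IsTaggedPartition (w i) (w (i+1)) n' t' x' ∧ IsFine δ n' t' x' ∧
            RiemannSum f n' t' x' = si) ∧
          (∀ j ∈ S, i = 2*j+1 → si - H i = f (x j) * (d j - c j) - F j) ∧
          ((∀ j ∈ S, i ≠ 2*j+1) → |si - H i| < η) := by
        intro i
        by_cases hi : i < 2*p+1
        swap
        · exact ⟨0, fun h => absurd h hi⟩
        by_cases hkeep : ∃ j ∈ S, i = 2*j+1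
        · obtain ⟨j, hjS, rfl⟩ := hkeep
          have hjp : j < p := Finset.mem_range.mp (hS hjS)
          refine ⟨f (x j) * (d j - c j), fun _ => ⟨?_, ?_, ?_⟩⟩
          · refine ⟨1, fun k => if k = 0 then c j else d j, fun _ => x j, ?_, ?_,
              rs_single f _ _ _⟩
            · rw [hwodd j hjp, show 2*j+1+1 = 2*j+2 by ring, hweven j hjp]
              exact tp_single (hfam.1 j hjp).2.1 (hfam.2.2 j hjp)
            · exact fine_single δ (hfine j hjp)
          · intro j' hj' heq
            have : j' = j := by omega
            subst this
            rw [hHF j' hjp]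
          · intro hno
            exact absurd rfl (hno j hjS)
        · obtain ⟨g, hgpos, hge⟩ := hH i hi η hη
          have hsubi : Set.Icc (w i) (w (i+1)) ⊆ Set.Icc a b := fun z hz =>
            ⟨(hwmem i).1.trans hz.1, hz.2.trans (hwmem (i+1)).2⟩
          obtain ⟨n', t', x', hP, hPf⟩ := cousin (hmono i hi) (fun z => min (δ z) (g z))
            (fun z hz => lt_min (hδpos z (hsubi hz)) (hgpos z hz))
          refine ⟨RiemannSum f n' t' x', fun _ => ⟨⟨n', t', x', hP,
            fine_of_le hPf (fun z => min_le_left _ _), rfl⟩, ?_, fun _ => ?_⟩⟩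
          · intro j hjS heq
            exact absurd ⟨j, hjS, heq⟩ hkeep
          · exact hge n' t' x' hP (fine_of_le hPf (fun z => min_le_right _ _))
      choose s hs using pieces
      obtain ⟨n', t', x', hP, hPf, hsum⟩ := concat_chain f δ w s (2*p+1)
        (fun i hi => (hs i hi).1)
      rw [hw0, hwm] at hP
      have herr := hδ n' t' x' hP hPf
      rw [hsum] at herr
      set A := S.image (fun j => 2*j+1) with hA
      have hAsub : A ⊆ Finset.range (2*p+1) := by
        intro i hi
        obtain ⟨j, hjS, rfl⟩ := Finset.mem_image.mp hi
        have := Finset.mem_range.mp (hS hjS)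
        exact Finset.mem_range.mpr (by omega)
      have hsumA : ∑ i ∈ A, (s i - H i) = ∑ j ∈ S, (f (x j) * (d j - c j) - F j) := by
        rw [hA, Finset.sum_image (fun a ha b hb h => by omega)]
        apply Finset.sum_congr rfl
        intro j hjS
        have hjp : j < p := Finset.mem_range.mp (hS hjS)
        exact (hs (2*j+1) (by omega)).2.1 j hjS rfl
      have hsplit : ∑ i ∈ Finset.range (2*p+1), (s i - H i) =
          ∑ i ∈ Finset.range (2*p+1) \ A, (s i - H i) + ∑ i ∈ A, (s i - H i) :=
        (Finset.sum_sdiff hAsub).symm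
      have hrest : |∑ i ∈ Finset.range (2*p+1) \ A, (s i - H i)| ≤ (2*(p:ℝ)+1) * η := by
        calc |∑ i ∈ Finset.range (2*p+1) \ A, (s i - H i)|
            ≤ ∑ i ∈ Finset.range (2*p+1) \ A, |s i - H i| := Finset.abs_sum_le_sum_abs _ _
          _ ≤ (Finset.range (2*p+1) \ A).card • η := by
              apply Finset.sum_le_card_nsmul
              intro i hi
              obtain ⟨hi1, hi2⟩ := Finset.mem_sdiff.mp hi
              have hilt := Finset.mem_range.mp hi1
              refine le_of_lt ((hs i hilt).2.2 ?_)
              intro j hjS heq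
              exact hi2 (Finset.mem_image.mpr ⟨j, hjS, heq.symm⟩)
          _ = ((Finset.range (2*p+1) \ A).card : ℝ) * η := nsmul_eq_mul _ _
          _ ≤ (2*(p:ℝ)+1) * η := by
              apply mul_le_mul_of_nonneg_right _ hη.le
              have h1 : (Finset.range (2*p+1) \ A).card ≤ 2*p+1 :=
                le_trans (Finset.card_le_card (Finset.sdiff_subset)) (by simp)
              push_cast
              exact_mod_cast h1
      have htot : |∑ i ∈ Finset.range (2*p+1), (s i - H i)| < ε := by
        rw [Finset.sum_sub_distrib, ← hIsum]
        exact herr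
      calc |∑ j ∈ S, (f (x j) * (d j - c j) - F j)| = |∑ i ∈ A, (s i - H i)| := by
            rw [hsumA]
        _ = |∑ i ∈ Finset.range (2*p+1), (s i - H i) -
              ∑ i ∈ Finset.range (2*p+1) \ A, (s i - H i)| := by
            congr 1; rw [hsplit]; ring
        _ ≤ |∑ i ∈ Finset.range (2*p+1), (s i - H i)| +
              |∑ i ∈ Finset.range (2*p+1) \ A, (s i - H i)| := abs_sub _ _
        _ ≤ ε + (2*(p:ℝ)+1) * η := add_le_add htot.le hrest
    refine le_of_forall_pos_le_add (fun ζ hζ => ?_)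
    have hkey := key (ζ / (2*(p:ℝ)+2)) (by positivity)
    have hle : (2*(p:ℝ)+1) * (ζ/(2*(p:ℝ)+2)) ≤ ζ := by
      rw [← mul_div_assoc, div_le_iff₀ (by positivity)]
      nlinarith [hζ.le]
    linarith
  have hpos := main (Finset.filter (fun j => 0 ≤ f (x j) * (d j - c j) - F j)
    (Finset.range p)) (Finset.filter_subset _ _)
  have hneg := main (Finset.filter (fun j => ¬ 0 ≤ f (x j) * (d j - c j) - F j)
    (Finset.range p)) (Finset.filter_subset _ _)
  have hsplit : ∑ j ∈ Finset.range p, |f (x j) * (d j - c j) - F j| =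
      (∑ j ∈ Finset.filter (fun j => 0 ≤ f (x j) * (d j - c j) - F j) (Finset.range p),
        (f (x j) * (d j - c j) - F j)) +
      (∑ j ∈ Finset.filter (fun j => ¬ 0 ≤ f (x j) * (d j - c j) - F j) (Finset.range p),
        -(f (x j) * (d j - c j) - F j)) := by
    rw [← Finset.sum_filter_add_sum_filter_not (Finset.range p)
      (fun j => 0 ≤ f (x j) * (d j - c j) - F j)]
    congr 1
    · exact Finset.sum_congr rfl fun j hj => abs_of_nonneg (Finset.mem_filter.mp hj).2
    · exact Finset.sum_congr rfl fun j hj =>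
        abs_of_neg (not_le.mp (Finset.mem_filter.mp hj).2)
  rw [hsplit, Finset.sum_neg_distrib]
  have h1 : ∑ j ∈ Finset.filter (fun j => 0 ≤ f (x j) * (d j - c j) - F j) (Finset.range p),
      (f (x j) * (d j - c j) - F j) ≤ ε := (le_abs_self _).trans hpos
  have h2 : -(∑ j ∈ Finset.filter (fun j => ¬ 0 ≤ f (x j) * (d j - c j) - F j)
      (Finset.range p), (f (x j) * (d j - c j) - F j)) ≤ ε := (neg_le_abs _).trans hneg
  linarith
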